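/- arXiv:1205.0873 — 10 statements merged into one kernel-verified Lean document; each statement's English description precedes it below -/
import Mathlib

section
/- Every geodesic ptolemaic metric space is distance convex: for every point p ∈ X and every geodesic c : [0,1] → X (i.e. d(c(s),c(t)) = λ|s−t| for all s,t ∈ [0,1] and some λ ≥ 0), the function t ↦ d(p, c(t)) is convex on [0,1]. -/
open Metric Set Filter Topology

/-- A metric space is ptolemaic if all quadruples satisfy the Ptolemy inequality. -/
def Ptolemaic (X : Type*) [MetricSpace X] : Prop :=
  ∀ x y z w : X, dist x y * dist z w ≤ dist x z * dist y w + dist x w * dist y z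

/-- A metric space is geodesic if every pair of points is joined by a geodesic. -/
def GeodesicMetricSpace (X : Type*) [MetricSpace X] : Prop :=
  ∀ x y : X, ∃ c : ℝ → X, c 0 = x ∧ c 1 = y ∧
    ∀ s ∈ Set.Icc (0:ℝ) 1, ∀ t ∈ Set.Icc (0:ℝ) 1,
      dist (c s) (c t) = dist x y * |s - t|

/-- **A geodesic PT space is distance convex.** -/
theorem geodesic_ptolemaic_distance_convex (X : Type*) [MetricSpace X]
    (hPT : Ptolemaic X) (hgeo : GeodesicMetricSpace X)
    (p : X) (c : ℝ → X) (l : ℝ) (hl : 0 ≤ l)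
    (hc : ∀ s ∈ Set.Icc (0:ℝ) 1, ∀ t ∈ Set.Icc (0:ℝ) 1,
      dist (c s) (c t) = l * |s - t|) :
    ConvexOn ℝ (Set.Icc (0:ℝ) 1) (fun t => dist p (c t)) := by
  refine ⟨convex_Icc 0 1, ?_⟩
  intro x hx y hy a b ha hb hab
  have hm : a • x + b • y ∈ Set.Icc (0:ℝ) 1 := (convex_Icc 0 1) hx hy ha hb hab
  simp only [smul_eq_mul] at hm ⊢
  set m := a * x + b * y with hmdef
  have h1 : dist (c m) (c y) = l * (a * |x - y|) := by
    rw [hc m hm y hy]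
    congr 1
    rw [show m - y = a * (x - y) by linear_combination y * hab, abs_mul, abs_of_nonneg ha]
  have h2 : dist (c m) (c x) = l * (b * |x - y|) := by
    rw [hc m hm x hx]
    congr 1
    rw [show m - x = b * (y - x) by linear_combination x * hab, abs_mul, abs_of_nonneg hb,
      abs_sub_comm]
  have hpt := hPT p (c m) (c x) (c y)
  rw [hc x hx y hy, h1, h2] at hpt
  by_cases hD : l * |x - y| = 0
  · have hcx : dist p (c x) = dist p (c m) := by
      have : dist (c m) (c x) = 0 := by rw [h2]; nlinarith [hD]
      rw [dist_eq_zero] at this; rw [this]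
    have hcy : dist p (c y) = dist p (c m) := by
      have : dist (c m) (c y) = 0 := by rw [h1]; nlinarith [hD]
      rw [dist_eq_zero] at this; rw [this]
    rw [hcx, hcy]
    nlinarith [hab, dist_nonneg (x := p) (y := c m)]
  · have hDpos : 0 < l * |x - y| :=
      lt_of_le_of_ne (mul_nonneg hl (abs_nonneg _)) (Ne.symm hD)
    nlinarith [hpt, hDpos]
end

section
/- Let X be a distance convex geodesic metric space. Then every local geodesic in X is globally minimizing: if c : [a,b] → X and there is λ ≥ 0 such that every t ∈ [a,b] has a neighborhood I' ⊆ [a,b] on which d(c(s),c(s')) = λ|s−s'| for all s,s' ∈ I', then d(c(s),c(s')) = λ|s−s'| for all s,s' ∈ [a,b]. -/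
open Metric Set Filter Topology

/-- A metric space is distance convex if the distance to any fixed point is
convex along every geodesic. -/
def DistanceConvex (X : Type*) [MetricSpace X] : Prop :=
  ∀ p : X, ∀ c : ℝ → X, ∀ l : ℝ, 0 ≤ l →
    (∀ s ∈ Set.Icc (0:ℝ) 1, ∀ t ∈ Set.Icc (0:ℝ) 1,
      dist (c s) (c t) = l * |s - t|) →
    ConvexOn ℝ (Set.Icc (0:ℝ) 1) (fun t => dist p (c t))

/-- Key lemma: a local geodesic on `[a,b]` is minimizing from its left endpoint. -/
lemma key_local_geodesic (X : Type*) [MetricSpace X]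
    (hdc : DistanceConvex X)
    (a b : ℝ) (c : ℝ → X) (l : ℝ) (hl : 0 ≤ l)
    (hloc : ∀ t ∈ Set.Icc a b, ∃ ε > (0:ℝ),
      ∀ s ∈ Set.Icc a b ∩ Set.Ioo (t - ε) (t + ε),
      ∀ s' ∈ Set.Icc a b ∩ Set.Ioo (t - ε) (t + ε),
        dist (c s) (c s') = l * |s - s'|) :
    ∀ t ∈ Set.Icc a b, dist (c a) (c t) = l * (t - a) := by
  intro t0 ht0
  have hab : a ≤ b := ht0.1.trans ht0.2
  set S : Set ℝ :=
    {t | t ∈ Set.Icc a b ∧ ∀ u ∈ Set.Icc a t, dist (c a) (c u) = l * (u - a)} with hS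
  have haS : a ∈ S := by
    refine ⟨⟨le_refl a, hab⟩, ?_⟩
    intro u hu
    have : u = a := le_antisymm hu.2 hu.1
    simp [this]
  have hbdd : BddAbove S := ⟨b, fun x hx => hx.1.2⟩
  set T := sSup S with hT
  have haT : a ≤ T := le_csSup hbdd haS
  have hTb : T ≤ b := csSup_le ⟨a, haS⟩ (fun x hx => hx.1.2)
  have hlt : ∀ u ∈ Set.Ico a T, dist (c a) (c u) = l * (u - a) := by
    intro u hu
    obtain ⟨t, htS, hut⟩ := exists_lt_of_lt_csSup ⟨a, haS⟩ hu.2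
    exact htS.2 u ⟨hu.1, le_of_lt hut⟩
  have hTeq : dist (c a) (c T) = l * (T - a) := by
    rcases eq_or_lt_of_le haT with h | h
    · simp [← h]
    · obtain ⟨ε, hε, hgeod⟩ := hloc T ⟨haT, hTb⟩
      have hsmall : ∀ δ > (0:ℝ), |dist (c a) (c T) - l * (T - a)| ≤ δ := by
        intro δ hδ
        set δ' := min (min (ε / 2) (T - a)) (δ / (2 * l + 1)) with hδ'
        have hδ'1 : δ' ≤ ε / 2 := le_trans (min_le_left _ _) (min_le_left _ _)
        have hδ'2 : δ' ≤ T - a := le_trans (min_le_left _ _) (min_le_right _ _)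
        have hδ'3 : δ' ≤ δ / (2 * l + 1) := min_le_right _ _
        have hδ'pos : 0 < δ' := lt_min (lt_min (by linarith) (by linarith)) (by positivity)
        set u := T - δ' with hu
        have hu1 : u ∈ Set.Ico a T := ⟨by simp only [hu]; linarith, by simp only [hu]; linarith⟩
        have hequ : dist (c a) (c u) = l * (u - a) := hlt u hu1
        have hdu : dist (c u) (c T) = l * |u - T| := by
          refine hgeod u ⟨⟨hu1.1, le_trans (le_of_lt hu1.2) hTb⟩, ?_, ?_⟩
            T ⟨⟨haT, hTb⟩, by linarith, by linarith⟩
          · simp only [hu]; linarith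
          · have := hu1.2; linarith
        have habs : |u - T| = δ' := by
          rw [abs_sub_comm]
          have : T - u = δ' := by simp [hu]
          rw [this]
          exact abs_of_pos hδ'pos
        rw [habs] at hdu
        have h1 : dist (c a) (c T) ≤ dist (c a) (c u) + dist (c u) (c T) :=
          dist_triangle _ _ _
        have h2 : dist (c a) (c u) ≤ dist (c a) (c T) + dist (c u) (c T) := by
          have := dist_triangle (c a) (c T) (c u)
          rw [dist_comm (c T) (c u)] at this
          exact this
        have hub : u - a = T - a - δ' := by simp [hu]; ring
        have hbound : |dist (c a) (c T) - l * (T - a)| ≤ 2 * l * δ' := by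
          rw [abs_le]
          constructor
          · nlinarith [hequ, hdu, h2]
          · nlinarith [hequ, hdu, h1]
        have : 2 * l * δ' ≤ δ := by
          have h3 : 2 * l * δ' ≤ 2 * l * (δ / (2 * l + 1)) :=
            mul_le_mul_of_nonneg_left hδ'3 (by linarith)
          have h4 : 2 * l * (δ / (2 * l + 1)) ≤ δ := by
            rw [div_eq_inv_mul]
            rw [ ← mul_assoc]
            have : (2 * l) * (2 * l + 1)⁻¹ ≤ 1 := by
              rw [mul_inv_le_iff₀ (by positivity)]
              linarith
            nlinarith
          linarith
        linarith [hbound]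
      have : |dist (c a) (c T) - l * (T - a)| ≤ 0 := by
        refine le_of_forall_pos_le_add ?_
        intro ε' hε'
        simpa using hsmall ε' hε'
      have := abs_nonpos_iff.mp this
      linarith [sub_eq_zero.mp this]
  have hfull : ∀ u ∈ Set.Icc a T, dist (c a) (c u) = l * (u - a) := by
    intro u hu
    rcases eq_or_lt_of_le hu.2 with h | h
    · rw [h]; exact hTeq
    · exact hlt u ⟨hu.1, h⟩
  have hTeqb : T = b := by
    by_contra hne
    have hTlt : T < b := lt_of_le_of_ne hTb hne
    obtain ⟨ε, hε, hgeod⟩ := hloc T ⟨haT, hTb⟩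
    set β := min b (T + ε / 2) with hβ
    have hTβ : T < β := lt_min hTlt (by linarith)
    have hβb : β ≤ b := min_le_left _ _
    have hβε : β < T + ε := lt_of_le_of_lt (min_le_right _ _) (by linarith)
    have hupper : ∀ t ∈ Set.Icc T β, dist (c a) (c t) ≤ l * (t - a) := by
      intro t ht
      have hd : dist (c T) (c t) = l * |T - t| :=
        hgeod T ⟨⟨haT, hTb⟩, by linarith, by linarith⟩
          t ⟨⟨haT.trans ht.1, ht.2.trans hβb⟩, by linarith [ht.1],
            lt_of_le_of_lt ht.2 hβε⟩
      have habs : |T - t| = t - T := by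
        rw [abs_sub_comm]; exact abs_of_nonneg (by linarith [ht.1])
      calc dist (c a) (c t) ≤ dist (c a) (c T) + dist (c T) (c t) := dist_triangle _ _ _
        _ = l * (T - a) + l * (t - T) := by rw [hTeq, hd, habs]
        _ = l * (t - a) := by ring
    have hlower : ∀ t ∈ Set.Ioc T β, l * (t - a) ≤ dist (c a) (c t) := by
      rcases eq_or_lt_of_le haT with hEq | haTlt
      · -- a = T : direct from the local geodesic property
        intro t ht
        have hd : dist (c a) (c t) = l * |a - t| := by
          refine hgeod a ⟨⟨le_refl a, hab⟩, ?_, ?_⟩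
            t ⟨⟨haT.trans (le_of_lt ht.1), ht.2.trans hβb⟩, ?_, lt_of_le_of_lt ht.2 hβε⟩
          · rw [← hEq]; linarith
          · rw [← hEq]; linarith
          · have := ht.1; linarith
        have habs : |a - t| = t - a := by
          rw [abs_sub_comm]; exact abs_of_nonneg (by rw [hEq]; linarith [ht.1])
        rw [hd, habs]
      · -- a < T : use distance convexity on the local geodesic segment [α, β]
        set α := max a (T - ε / 2) with hα
        have hαa : a ≤ α := le_max_left _ _
        have hαT : α < T := max_lt haTlt (by linarith)
        have hαε : T - ε < α := lt_of_lt_of_le (by linarith) (le_max_right _ _)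
        have hβα : 0 < β - α := by linarith
        have hseg : ∀ s ∈ Set.Icc α β, ∀ s' ∈ Set.Icc α β,
            dist (c s) (c s') = l * |s - s'| := by
          intro s hs s' hs'
          exact hgeod s ⟨⟨hαa.trans hs.1, hs.2.trans hβb⟩,
              lt_of_lt_of_le hαε hs.1, lt_of_le_of_lt hs.2 hβε⟩
            s' ⟨⟨hαa.trans hs'.1, hs'.2.trans hβb⟩,
              lt_of_lt_of_le hαε hs'.1, lt_of_le_of_lt hs'.2 hβε⟩
        set γ : ℝ → X := fun u => c (α + u * (β - α)) with hγ
        have hmemγ : ∀ u ∈ Set.Icc (0:ℝ) 1, α + u * (β - α) ∈ Set.Icc α β := by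
          intro u hu
          constructor
          · nlinarith [hu.1]
          · nlinarith [hu.2]
        have hgeo' : ∀ u ∈ Set.Icc (0:ℝ) 1, ∀ u' ∈ Set.Icc (0:ℝ) 1,
            dist (γ u) (γ u') = (l * (β - α)) * |u - u'| := by
          intro u hu u' hu'
          have := hseg _ (hmemγ u hu) _ (hmemγ u' hu')
          simp only [hγ] at this ⊢
          rw [this]
          have : α + u * (β - α) - (α + u' * (β - α)) = (u - u') * (β - α) := by ring
          rw [this, abs_mul, abs_of_pos hβα]
          ring
        have hconv : ConvexOn ℝ (Set.Icc (0:ℝ) 1) (fun u => dist (c a) (γ u)) :=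
          hdc (c a) γ (l * (β - α)) (by positivity) hgeo'
        intro t ht
        have htα : α < t := hαT.trans ht.1
        set μ := (T - α) / (t - α) with hμ
        have hμ0 : 0 < μ := div_pos (by linarith) (by linarith)
        have hμ1 : μ ≤ 1 := by
          rw [div_le_one (by linarith)]
          linarith [ht.1]
        set ut := (t - α) / (β - α) with hut
        have htα' : t - α ≠ 0 := ne_of_gt (by linarith)
        have hβα' : β - α ≠ 0 := ne_of_gt hβα
        have hut0 : 0 ≤ ut := div_nonneg (by linarith) (le_of_lt hβα)
        have hut1 : ut ≤ 1 := by
          rw [div_le_one hβα]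
          linarith [ht.2]
        have h0mem : (0:ℝ) ∈ Set.Icc (0:ℝ) 1 := by norm_num
        have hutmem : ut ∈ Set.Icc (0:ℝ) 1 := ⟨hut0, hut1⟩
        have hci := hconv.2 h0mem hutmem (by linarith : (0:ℝ) ≤ 1 - μ)
          (le_of_lt hμ0) (by ring : (1 - μ) + μ = 1)
        simp only [smul_eq_mul, mul_zero, zero_add] at hci
        have hμut : μ * ut = (T - α) / (β - α) := by
          rw [hμ, hut]
          field_simp
        have hγμ : γ (μ * ut) = c T := by
          simp only [hγ, hμut]
          congr 1
          field_simp
          ring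
        have hγ0 : γ 0 = c α := by simp [hγ]
        have hγut : γ ut = c t := by
          simp only [hγ, hut]
          congr 1
          field_simp
          ring
        rw [hγμ, hγ0, hγut] at hci
        rw [hTeq, hfull α ⟨hαa, le_of_lt hαT⟩] at hci
        have hμt : μ * (t - α) = T - α := div_mul_cancel₀ _ (by linarith : t - α ≠ 0)
        have h1 : μ * (l * (t - a)) ≤ μ * dist (c a) (c t) := by nlinarith [hμt, hci]
        exact le_of_mul_le_mul_left h1 hμ0
    have hβS : β ∈ S := by
      refine ⟨⟨haT.trans (le_of_lt hTβ), hβb⟩, ?_⟩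
      intro u hu
      rcases le_or_gt u T with h | h
      · exact hfull u ⟨hu.1, h⟩
      · exact le_antisymm (hupper u ⟨le_of_lt h, hu.2⟩) (hlower u ⟨h, hu.2⟩)
    have : β ≤ T := le_csSup hbdd hβS
    linarith
  exact hfull t0 ⟨ht0.1, by rw [hTeqb]; exact ht0.2⟩

/-- **In a distance convex geodesic space every local geodesic is globally
minimizing.** -/
theorem local_geodesic_globally_minimizing (X : Type*) [MetricSpace X]
    (hdc : DistanceConvex X) (hgeo : GeodesicMetricSpace X)
    (a b : ℝ) (hab : a ≤ b) (c : ℝ → X) (l : ℝ) (hl : 0 ≤ l)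
    (hloc : ∀ t ∈ Set.Icc a b, ∃ ε > (0:ℝ),
      ∀ s ∈ Set.Icc a b ∩ Set.Ioo (t - ε) (t + ε),
      ∀ s' ∈ Set.Icc a b ∩ Set.Ioo (t - ε) (t + ε),
        dist (c s) (c s') = l * |s - s'|) :
    ∀ s ∈ Set.Icc a b, ∀ s' ∈ Set.Icc a b, dist (c s) (c s') = l * |s - s'| := by
  have main : ∀ s ∈ Set.Icc a b, ∀ s' ∈ Set.Icc s b,
      dist (c s) (c s') = l * (s' - s) := by
    intro s hs
    refine key_local_geodesic X hdc s b c l hl ?_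
    intro t ht
    obtain ⟨ε, hε, hg⟩ := hloc t ⟨hs.1.trans ht.1, ht.2⟩
    exact ⟨ε, hε, fun u hu u' hu' =>
      hg u ⟨⟨hs.1.trans hu.1.1, hu.1.2⟩, hu.2⟩ u' ⟨⟨hs.1.trans hu'.1.1, hu'.1.2⟩, hu'.2⟩⟩
  intro s hs s' hs'
  rcases le_total s s' with h | h
  · rw [abs_sub_comm, abs_of_nonneg (by linarith : (0:ℝ) ≤ s' - s)]
    exact main s hs s' ⟨h, hs'.2⟩
  · rw [dist_comm, abs_of_nonneg (by linarith : (0:ℝ) ≤ s - s')]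
    exact main s' hs' s ⟨h, hs.2⟩
end

section
/- Let X be a geodesic ptolemaic metric space. Then every local geodesic in X is globally minimizing: if c : [a,b] → X and there is λ ≥ 0 such that every t ∈ [a,b] has a neighborhood I' ⊆ [a,b] on which d(c(s),c(s')) = λ|s−s'| for all s,s' ∈ I', then d(c(s),c(s')) = λ|s−s'| for all s,s' ∈ [a,b]. -/
open Metric Set Filter Topology

/-- **In a geodesic PT space every local geodesic is globally minimizing.** -/
theorem local_geodesic_globally_minimizing_ptolemaic (X : Type*) [MetricSpace X]
    (hPT : Ptolemaic X) (hgeo : GeodesicMetricSpace X)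
    (a b : ℝ) (hab : a ≤ b) (c : ℝ → X) (l : ℝ) (hl : 0 ≤ l)
    (hloc : ∀ t ∈ Set.Icc a b, ∃ ε > (0:ℝ),
      ∀ s ∈ Set.Icc a b ∩ Set.Ioo (t - ε) (t + ε),
      ∀ s' ∈ Set.Icc a b ∩ Set.Ioo (t - ε) (t + ε),
        dist (c s) (c s') = l * |s - s'|) :
    ∀ s ∈ Set.Icc a b, ∀ s' ∈ Set.Icc a b, dist (c s) (c s') = l * |s - s'| := by
  have main : ∀ s ∈ Set.Icc a b, ∀ u ∈ Set.Icc a b, s ≤ u →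
      dist (c s) (c u) = l * (u - s) := by
    intro s hs
    set A : Set ℝ := {t | t ∈ Set.Icc s b ∧
      ∀ u ∈ Set.Icc s t, dist (c s) (c u) = l * (u - s)} with hAdef
    have hsA : s ∈ A := by
      refine ⟨⟨le_refl s, hs.2⟩, ?_⟩
      intro u hu
      have : u = s := le_antisymm hu.2 hu.1
      simp [this]
    have hbddA : BddAbove A := ⟨b, fun t ht => ht.1.2⟩
    have hAne : A.Nonempty := ⟨s, hsA⟩
    set T := sSup A with hTdef
    have hsT : s ≤ T := le_csSup hbddA hsA
    have hTb : T ≤ b := csSup_le hAne fun t ht => ht.1.2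
    have hTab : T ∈ Set.Icc a b := ⟨le_trans hs.1 hsT, hTb⟩
    obtain ⟨ε, hε, hloc'⟩ := hloc T hTab
    -- points strictly below T are good
    have hPu : ∀ u, s ≤ u → u < T → dist (c s) (c u) = l * (u - s) := by
      intro u hsu huT
      obtain ⟨t, htA, hut⟩ := exists_lt_of_lt_csSup hAne huT
      exact htA.2 u ⟨hsu, le_of_lt hut⟩
    -- T itself is good
    have hPT0 : dist (c s) (c T) = l * (T - s) := by
      rcases eq_or_lt_of_le hsT with hsT' | hsT'
      · simp [← hsT']
      · -- for small δ > 0, find t ∈ A with T - δ < t ≤ T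
        have key : ∀ δ : ℝ, 0 < δ → δ < ε → δ < T - s →
            dist (c s) (c T) ≤ l * (T - s) ∧
            l * (T - s) ≤ dist (c s) (c T) + 2 * l * δ := by
          intro δ hδ hδε hδT
          obtain ⟨t, htA, htl⟩ := exists_lt_of_lt_csSup hAne
            (show T - δ < T by linarith)
          have htT : t ≤ T := le_csSup hbddA htA
          have hst : s ≤ t := by linarith [htA.1.1]
          have h1 : dist (c s) (c t) = l * (t - s) := htA.2 t ⟨hst, le_refl t⟩
          have htab : t ∈ Set.Icc a b := ⟨le_trans hs.1 hst, htA.1.2⟩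
          have h2 : dist (c t) (c T) = l * |t - T| := by
            apply hloc' t ⟨htab, by constructor <;> linarith⟩ T
            exact ⟨hTab, by constructor <;> linarith⟩
          have h2' : dist (c t) (c T) = l * (T - t) := by
            rw [h2, abs_of_nonpos (by linarith)]; ring_nf
          constructor
          · calc dist (c s) (c T) ≤ dist (c s) (c t) + dist (c t) (c T) :=
                  dist_triangle _ _ _
              _ = l * (T - s) := by rw [h1, h2']; ring
          · have := dist_triangle (c s) (c T) (c t)
            rw [dist_comm (c T) (c t), h2'] at this
            rw [h1] at this
            nlinarith
        have hub : dist (c s) (c T) ≤ l * (T - s) :=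
          (key (min (ε/2) ((T-s)/2)) (lt_min (by linarith) (by linarith))
            (by have := min_le_left (ε/2) ((T-s)/2); linarith)
            (by have := min_le_right (ε/2) ((T-s)/2); linarith)).1
        have hlb : l * (T - s) ≤ dist (c s) (c T) := by
          apply le_of_forall_pos_le_add
          intro η hη
          set δ := min (min (ε/2) ((T-s)/2)) (η / (2*l+1)) with hδdef
          have hδpos : 0 < δ :=
            lt_min (lt_min (by linarith) (by linarith)) (by positivity)
          have hδ1 : δ ≤ ε/2 := le_trans (min_le_left _ _) (min_le_left _ _)
          have hδ2 : δ ≤ (T-s)/2 := le_trans (min_le_left _ _) (min_le_right _ _)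
          have h := (key δ hδpos (by linarith) (by linarith)).2
          have hδη : δ ≤ η / (2*l+1) := min_le_right _ _
          have hδη' : δ * (2*l+1) ≤ η :=
            (le_div_iff₀ (by linarith : (0:ℝ) < 2*l+1)).mp hδη
          nlinarith
        linarith
    have hTA : T ∈ A := by
      refine ⟨⟨hsT, hTb⟩, ?_⟩
      intro u hu
      rcases lt_or_eq_of_le hu.2 with h | h
      · exact hPu u hu.1 h
      · rw [h]; exact hPT0
    -- now show T = b
    have hTeqb : T = b := by
      by_contra hne
      have hTltb : T < b := lt_of_le_of_ne hTb hne
      -- one step forward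
      have step : ∀ u, T < u → u ≤ b → u ≤ T + ε/4 →
          dist (c s) (c u) = l * (u - s) := by
        intro u hTu hub huε
        have huab : u ∈ Set.Icc a b := ⟨by linarith [hTab.1], hub⟩
        have humem : u ∈ Set.Icc a b ∩ Set.Ioo (T - ε) (T + ε) :=
          ⟨huab, by constructor <;> linarith⟩
        have hTmem : T ∈ Set.Icc a b ∩ Set.Ioo (T - ε) (T + ε) :=
          ⟨hTab, by constructor <;> linarith⟩
        have dzw : dist (c T) (c u) = l * (u - T) := by
          rw [hloc' T hTmem u humem, abs_of_nonpos (by linarith)]; ring_nf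
        have hupper : dist (c s) (c u) ≤ l * (u - s) := by
          calc dist (c s) (c u) ≤ dist (c s) (c T) + dist (c T) (c u) :=
                dist_triangle _ _ _
            _ = l * (u - s) := by rw [hPT0, dzw]; ring
        rcases eq_or_lt_of_le hsT with hsT' | hsT'
        · rw [hsT']; exact dzw
        · rcases eq_or_lt_of_le hl with hl0 | hlpos
          · have : 0 ≤ dist (c s) (c u) := dist_nonneg
            rw [← hl0] at hupper ⊢
            simp only [zero_mul] at hupper ⊢
            linarith
          · set ε' := min (ε/4) (T - s) with hε'def
            have hε'pos : 0 < ε' := lt_min (by linarith) (by linarith)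
            have hε'1 : ε' ≤ ε/4 := min_le_left _ _
            have hε'2 : ε' ≤ T - s := min_le_right _ _
            set y := T - ε' with hydef
            have hymem : y ∈ Set.Icc a b ∩ Set.Ioo (T - ε) (T + ε) := by
              refine ⟨⟨?_, ?_⟩, ?_, ?_⟩ <;> [skip; skip; skip; skip]
              · have : s ≤ y := by simp only [hydef]; linarith
                linarith [hs.1]
              · simp only [hydef]; linarith
              · simp only [hydef]; linarith
              · simp only [hydef]; linarith
            have dxy : dist (c s) (c y) = l * (y - s) :=
              hTA.2 y ⟨by simp only [hydef]; linarith, by simp only [hydef]; linarith⟩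
            have dyz : dist (c y) (c T) = l * ε' := by
              rw [hloc' y hymem T hTmem]
              congr 1
              rw [abs_of_nonpos (by simp only [hydef]; linarith)]
              simp only [hydef]; ring
            have dyw : dist (c y) (c u) = l * (ε' + (u - T)) := by
              rw [hloc' y hymem u humem]
              congr 1
              rw [abs_of_nonpos (by simp only [hydef]; linarith)]
              simp only [hydef]; ring
            have hpt := hPT (c s) (c T) (c y) (c u)
            rw [hPT0, dxy, dyw, dzw, dist_comm (c T) (c y), dyz] at hpt
            have hlower : l * (u - s) ≤ dist (c s) (c u) := by
              simp only [hydef] at hpt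
              have hle2 : (0:ℝ) < l * ε' := mul_pos hlpos hε'pos
              have h2 : (l*ε') * (l*(u-s)) ≤ (l*ε') * dist (c s) (c u) := by
                nlinarith [hpt]
              exact le_of_mul_le_mul_left h2 hle2
            linarith
      -- contradiction with sup
      set t' := min b (T + ε/4) with ht'def
      have hTt' : T < t' := lt_min hTltb (by linarith)
      have ht'A : t' ∈ A := by
        refine ⟨⟨by linarith, min_le_left _ _⟩, ?_⟩
        intro v hv
        rcases le_or_gt v T with h | h
        · exact hTA.2 v ⟨hv.1, h⟩
        · exact step v h (le_trans hv.2 (min_le_left _ _))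
            (le_trans hv.2 (min_le_right _ _))
      have : t' ≤ T := le_csSup hbddA ht'A
      linarith
    intro u hu hsu
    exact hTA.2 u ⟨hsu, hTeqb ▸ hu.2⟩
  intro s hs s' hs'
  rcases le_total s s' with h | h
  · rw [main s hs s' hs' h, abs_of_nonpos (by linarith)]; ring_nf
  · rw [dist_comm, main s' hs' s hs h, abs_of_nonneg (by linarith)]
end

section
/- Let X be a ptolemaic metric space and let c₁, c₂ : [0,∞) → X be asymptotic geodesic rays with Busemann functions b₁ = b_{c₁} and b₂ = b_{c₂}. Then the function b₁ − b₂ is constant on X. -/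
open Metric Set Filter Topology

/-- A unit-speed geodesic ray: an isometric embedding of `[0,∞)`. -/
def IsGeodesicRay {X : Type*} [MetricSpace X] (c : ℝ → X) : Prop :=
  ∀ s t : ℝ, 0 ≤ s → 0 ≤ t → dist (c s) (c t) = |s - t|

/-- Two rays are asymptotic if their distance is sublinear. -/
def AsymptoticRays {X : Type*} [MetricSpace X] (c₁ c₂ : ℝ → X) : Prop :=
  Filter.Tendsto (fun t => dist (c₁ t) (c₂ t) / t) Filter.atTop (nhds 0)

/-- `b` is the Busemann function of the ray `c`. -/
def IsBusemannOf {X : Type*} [MetricSpace X] (c : ℝ → X) (b : X → ℝ) : Prop :=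
  ∀ x : X, Filter.Tendsto (fun t => dist x (c t) - t) Filter.atTop (nhds (b x))

/-- **Asymptotic rays in a PT space have Busemann functions differing by a
constant.** -/
theorem busemann_of_asymptotic_rays_differ_by_constant
    (X : Type*) [MetricSpace X] (hPT : Ptolemaic X)
    (c₁ c₂ : ℝ → X) (h₁ : IsGeodesicRay c₁) (h₂ : IsGeodesicRay c₂)
    (hasym : AsymptoticRays c₁ c₂)
    (b₁ b₂ : X → ℝ) (hb₁ : IsBusemannOf c₁ b₁) (hb₂ : IsBusemannOf c₂ b₂) :
    ∃ C : ℝ, ∀ x : X, b₁ x - b₂ x = C := by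
  have key : ∀ x y : X, b₁ x + b₂ y ≤ b₂ x + b₁ y := by
    intro x y
    set f : ℝ → ℝ := fun t => (dist x (c₁ t) - t) + (dist y (c₂ t) - t) +
      ((dist x (c₁ t) - t) * (dist y (c₂ t) - t)) / t with hfdef
    set g : ℝ → ℝ := fun t => dist x y * (dist (c₁ t) (c₂ t) / t) +
      ((dist x (c₂ t) - t) + (dist y (c₁ t) - t) +
        ((dist x (c₂ t) - t) * (dist y (c₁ t) - t)) / t) with hgdef
    have hf : Tendsto f atTop (𝓝 (b₁ x + b₂ y)) := by
      have h1 := ((hb₁ x).mul (hb₂ y)).div_atTop tendsto_id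
      have := ((hb₁ x).add (hb₂ y)).add h1
      simpa [hfdef, div_eq_mul_inv] using this
    have hg : Tendsto g atTop (𝓝 (b₂ x + b₁ y)) := by
      have h1 := ((hb₂ x).mul (hb₁ y)).div_atTop tendsto_id
      have h2 := hasym.const_mul (dist x y)
      have := h2.add (((hb₂ x).add (hb₁ y)).add h1)
      simpa [hgdef, div_eq_mul_inv] using this
    have hle : f ≤ᶠ[atTop] g := by
      filter_upwards [eventually_gt_atTop (0 : ℝ)] with t ht
      have hp := hPT x (c₁ t) y (c₂ t)
      have ht' : t ≠ 0 := ne_of_gt ht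
      have k2 : f t * t = dist x (c₁ t) * dist y (c₂ t) - t ^ 2 := by
        simp only [hfdef]; field_simp; ring
      have k3 : g t * t = dist x y * dist (c₁ t) (c₂ t) +
          dist x (c₂ t) * dist y (c₁ t) - t ^ 2 := by
        simp only [hgdef]; field_simp; ring
      have : f t * t ≤ g t * t := by
        rw [k2, k3]
        rw [dist_comm (c₁ t) y] at hp
        linarith
      exact (mul_le_mul_iff_of_pos_right ht).mp this
    exact le_of_tendsto_of_tendsto hf hg hle
  rcases isEmpty_or_nonempty X with h | ⟨⟨x₀⟩⟩
  · exact ⟨0, fun x => (h.false x).elim⟩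
  · exact ⟨b₁ x₀ - b₂ x₀, fun x => by linarith [key x x₀, key x₀ x]⟩
end

section
/- Let X be a ptolemaic metric space and let c₁, c₂ : ℝ → X be parallel geodesic lines with Busemann functions b₁^± and b₂^± of the corresponding forward and backward rays. Then b₁⁺ + b₁⁻ = b₂⁺ + b₂⁻ as functions on X. -/
open Metric Set Filter Topology

/-- A unit-speed geodesic line: an isometric embedding of ℝ. -/
def IsGeodesicLine {X : Type*} [MetricSpace X] (c : ℝ → X) : Prop :=
  ∀ s t : ℝ, dist (c s) (c t) = |s - t|

/-- Two lines are parallel if their distance is sublinear in both directions. -/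
def ParallelLines {X : Type*} [MetricSpace X] (c₀ c₁ : ℝ → X) : Prop :=
  Filter.Tendsto (fun t => dist (c₀ t) (c₁ t) / |t|) Filter.atTop (nhds 0) ∧
  Filter.Tendsto (fun t => dist (c₀ t) (c₁ t) / |t|) Filter.atBot (nhds 0)

section Aux

variable {X : Type*} [MetricSpace X]

private lemma busemann_le_line {c : ℝ → X} (hc : IsGeodesicLine c) {b : X → ℝ}
    (hb : IsBusemannOf c b) (x : X) (t : ℝ) : b x ≤ dist x (c t) - t := by
  refine le_of_tendsto (hb x) ?_
  filter_upwards [eventually_ge_atTop t] with u hu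
  have h := dist_triangle x (c t) (c u)
  have hd : dist (c t) (c u) = u - t := by
    rw [hc, abs_of_nonpos (by linarith)]; ring
  linarith

private lemma busemann_lip {c : ℝ → X} {b : X → ℝ} (hb : IsBusemannOf c b)
    (x y : X) : b x ≤ b y + dist x y := by
  refine le_of_tendsto_of_tendsto' (hb x) ((hb y).add_const (dist x y)) (fun t => ?_)
  have h := dist_triangle x y (c t)
  linarith

private lemma busemann_zero {c : ℝ → X} (hc : IsGeodesicLine c) {b : X → ℝ}
    (hb : IsBusemannOf c b) : b (c 0) = 0 := by
  have h0 : Tendsto (fun t : ℝ => dist (c 0) (c t) - t) atTop (𝓝 0) := by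
    have hev : ∀ᶠ t : ℝ in atTop, (0 : ℝ) = dist (c 0) (c t) - t := by
      filter_upwards [eventually_ge_atTop (0 : ℝ)] with t ht
      rw [hc, abs_of_nonpos (by linarith)]; ring
    exact Tendsto.congr' hev tendsto_const_nhds
  exact tendsto_nhds_unique (hb (c 0)) h0

private lemma busemann_sum_nonneg {c : ℝ → X} (hc : IsGeodesicLine c) {bp bm : X → ℝ}
    (hbp : IsBusemannOf c bp) (hbm : IsBusemannOf (fun t => c (-t)) bm) (x : X) :
    0 ≤ bp x + bm x := by
  refine ge_of_tendsto ((hbp x).add (hbm x)) ?_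
  filter_upwards [eventually_ge_atTop (0 : ℝ)] with t ht
  have h := dist_triangle (c t) x (c (-t))
  have h2 : dist (c t) (c (-t)) = 2 * t := by
    rw [hc, abs_of_nonneg (by linarith)]; ring
  have h3 := dist_comm (c t) x
  linarith

/-- The key lemma: Busemann functions of forward-parallel lines in a Ptolemaic
space differ by a constant. -/
private lemma diff_const (hPT : Ptolemaic X)
    {c₁ c₂ : ℝ → X} (h₁ : IsGeodesicLine c₁) (h₂ : IsGeodesicLine c₂)
    (hpar : Tendsto (fun t => dist (c₁ t) (c₂ t) / |t|) atTop (𝓝 0))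
    {b₁ b₂ : X → ℝ} (hb₁ : IsBusemannOf c₁ b₁) (hb₂ : IsBusemannOf c₂ b₂) :
    ∃ A : ℝ, ∀ x, b₂ x = b₁ x + A := by
  set a : ℝ → ℝ := fun τ => b₂ (c₁ τ) + τ with ha
  set m : ℝ → ℝ := fun τ => b₁ (c₂ τ) + τ with hm
  have mono_a : Monotone a := by
    intro s t hst
    have hl := busemann_lip hb₂ (c₁ s) (c₁ t)
    have hd : dist (c₁ s) (c₁ t) = t - s := by
      rw [h₁, abs_of_nonpos (by linarith)]; ring
    simp only [ha]; linarith
  have mono_m : Monotone m := by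
    intro s t hst
    have hl := busemann_lip hb₁ (c₂ s) (c₂ t)
    have hd : dist (c₂ s) (c₂ t) = t - s := by
      rw [h₂, abs_of_nonpos (by linarith)]; ring
    simp only [hm]; linarith
  have key : ∀ τ, a τ + m τ ≤ 0 := by
    intro τ
    have hbd : ∀ᶠ t in atTop, a τ + m τ ≤
        (dist (c₁ τ) (c₂ τ) * dist (c₁ t) (c₂ t) - a τ * m τ) / (t - τ) := by
      filter_upwards [eventually_ge_atTop (τ + |a τ| + |m τ| + 1)] with t ht
      have habs1 := neg_abs_le (a τ)
      have habs2 := neg_abs_le (m τ)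
      have habs1' := le_abs_self (a τ)
      have habs2' := le_abs_self (m τ)
      have habs0 := abs_nonneg (a τ)
      have habs0' := abs_nonneg (m τ)
      have h1 : (t - τ) + a τ ≤ dist (c₁ τ) (c₂ t) := by
        have hh := busemann_le_line h₂ hb₂ (c₁ τ) t
        simp only [ha]; linarith
      have h2 : (t - τ) + m τ ≤ dist (c₂ τ) (c₁ t) := by
        have hh := busemann_le_line h₁ hb₁ (c₂ τ) t
        simp only [hm]; linarith
      have hpt := hPT (c₁ τ) (c₂ t) (c₂ τ) (c₁ t)
      have e1 : dist (c₁ τ) (c₁ t) = t - τ := by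
        rw [h₁, abs_of_nonpos (by linarith)]; ring
      have e2 : dist (c₂ t) (c₂ τ) = t - τ := by
        rw [h₂, abs_of_nonneg (by linarith)]
      have e3 : dist (c₂ t) (c₁ t) = dist (c₁ t) (c₂ t) := dist_comm _ _
      rw [e1, e2, e3] at hpt
      have n1 : (0 : ℝ) ≤ (t - τ) + a τ := by linarith
      have n2 : (0 : ℝ) ≤ (t - τ) + m τ := by linarith
      have prod : ((t - τ) + a τ) * ((t - τ) + m τ) ≤
          dist (c₁ τ) (c₂ τ) * dist (c₁ t) (c₂ t) + (t - τ) * (t - τ) := by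
        calc ((t - τ) + a τ) * ((t - τ) + m τ)
            ≤ dist (c₁ τ) (c₂ t) * dist (c₂ τ) (c₁ t) :=
              mul_le_mul h1 h2 n2 dist_nonneg
          _ ≤ dist (c₁ τ) (c₂ τ) * dist (c₁ t) (c₂ t) + (t - τ) * (t - τ) := hpt
      have htτ : (0 : ℝ) < t - τ := by linarith
      rw [le_div_iff₀ htτ]
      nlinarith [prod]
    have hlim : Tendsto (fun t : ℝ =>
        (dist (c₁ τ) (c₂ τ) * dist (c₁ t) (c₂ t) - a τ * m τ) / (t - τ)) atTop (𝓝 0) := by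
      have hlim1 : Tendsto (fun t : ℝ => dist (c₁ t) (c₂ t) / (t - τ)) atTop (𝓝 0) := by
        have hg : Tendsto (fun t : ℝ => 2 * (dist (c₁ t) (c₂ t) / |t|)) atTop (𝓝 0) := by
          simpa using hpar.const_mul 2
        refine squeeze_zero' ?_ ?_ hg
        · filter_upwards [eventually_ge_atTop (2 * |τ| + 1)] with t ht
          have htτ : (0 : ℝ) < t - τ := by
            have := neg_abs_le τ; have := le_abs_self τ; have := abs_nonneg τ; linarith
          exact div_nonneg dist_nonneg htτ.le
        · filter_upwards [eventually_ge_atTop (2 * |τ| + 1)] with t ht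
          have h1 := le_abs_self τ
          have h2 := abs_nonneg τ
          have ht0 : (0 : ℝ) < t := by linarith
          have habs : |t| = t := abs_of_pos ht0
          have htτ : (0 : ℝ) < t - τ := by linarith
          rw [habs, mul_div_assoc', div_le_div_iff₀ htτ ht0]
          nlinarith [mul_nonneg (dist_nonneg (x := c₁ t) (y := c₂ t))
            (show (0 : ℝ) ≤ t - 2 * τ by linarith)]
      have hlim2 : Tendsto (fun t : ℝ => (a τ * m τ) / (t - τ)) atTop (𝓝 0) := by
        apply Tendsto.div_atTop tendsto_const_nhds
        exact tendsto_atTop_add_const_right _ (-τ) tendsto_id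
      have := ((hlim1.const_mul (dist (c₁ τ) (c₂ τ))).sub hlim2)
      simp only [mul_zero, sub_zero] at this
      refine this.congr (fun t => ?_)
      ring
    exact ge_of_tendsto hlim hbd
  have bddA : BddAbove (Set.range a) := by
    refine ⟨-(m 0), ?_⟩
    rintro _ ⟨τ, rfl⟩
    have h1 : a τ ≤ a (max τ 0) := mono_a (le_max_left _ _)
    have h2 : m 0 ≤ m (max τ 0) := mono_m (le_max_right _ _)
    have h3 := key (max τ 0)
    linarith
  have bddM : BddAbove (Set.range m) := by
    refine ⟨-(a 0), ?_⟩
    rintro _ ⟨τ, rfl⟩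
    have h1 : m τ ≤ m (max τ 0) := mono_m (le_max_left _ _)
    have h2 : a 0 ≤ a (max τ 0) := mono_a (le_max_right _ _)
    have h3 := key (max τ 0)
    linarith
  have limA : Tendsto a atTop (𝓝 (⨆ τ, a τ)) := tendsto_atTop_ciSup mono_a bddA
  have limM : Tendsto m atTop (𝓝 (⨆ τ, m τ)) := tendsto_atTop_ciSup mono_m bddM
  set A := ⨆ τ, a τ with hA
  set M := ⨆ τ, m τ with hM
  have hAM : A + M ≤ 0 := le_of_tendsto (limA.add limM) (Eventually.of_forall key)
  have up : ∀ x, b₂ x ≤ b₁ x + A := by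
    intro x
    refine ge_of_tendsto ((hb₁ x).add limA) (Eventually.of_forall fun t => ?_)
    have hl := busemann_lip hb₂ x (c₁ t)
    simp only [ha]; linarith
  have lo : ∀ x, b₁ x ≤ b₂ x + M := by
    intro x
    refine ge_of_tendsto ((hb₂ x).add limM) (Eventually.of_forall fun t => ?_)
    have hl := busemann_lip hb₁ x (c₂ t)
    simp only [hm]; linarith
  refine ⟨A, fun x => ?_⟩
  have h1 := up x
  have h2 := lo x
  linarith

end Aux

/-- **Parallel lines in a PT space have the same sum of forward and backward
Busemann functions.** -/
theorem busemann_sum_eq_of_parallel_lines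
    (X : Type*) [MetricSpace X] (hPT : Ptolemaic X)
    (c₁ c₂ : ℝ → X) (h₁ : IsGeodesicLine c₁) (h₂ : IsGeodesicLine c₂)
    (hpar : ParallelLines c₁ c₂)
    (b₁p b₁m b₂p b₂m : X → ℝ)
    (hb₁p : IsBusemannOf (fun t => c₁ t) b₁p)
    (hb₁m : IsBusemannOf (fun t => c₁ (-t)) b₁m)
    (hb₂p : IsBusemannOf (fun t => c₂ t) b₂p)
    (hb₂m : IsBusemannOf (fun t => c₂ (-t)) b₂m) :
    ∀ x : X, b₁p x + b₁m x = b₂p x + b₂m x := by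
  have h₁' : IsGeodesicLine (fun t => c₁ (-t)) := by
    intro s t
    rw [h₁, neg_sub_neg, abs_sub_comm]
  have h₂' : IsGeodesicLine (fun t => c₂ (-t)) := by
    intro s t
    rw [h₂, neg_sub_neg, abs_sub_comm]
  have hparm : Tendsto (fun t => dist (c₁ (-t)) (c₂ (-t)) / |t|) atTop (𝓝 0) := by
    have := hpar.2.comp tendsto_neg_atTop_atBot
    simpa [Function.comp_def, abs_neg] using this
  obtain ⟨A, hA⟩ := diff_const hPT h₁ h₂ hpar.1 hb₁p hb₂p
  obtain ⟨A', hA'⟩ := diff_const hPT h₁' h₂' hparm hb₁m hb₂m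
  have z1 : b₁p (c₁ 0) = 0 := busemann_zero h₁ hb₁p
  have z2 : b₁m (c₁ 0) = 0 := by
    have := busemann_zero h₁' hb₁m
    simpa using this
  have z3 : b₂p (c₂ 0) = 0 := busemann_zero h₂ hb₂p
  have z4 : b₂m (c₂ 0) = 0 := by
    have := busemann_zero h₂' hb₂m
    simpa using this
  have n1 : 0 ≤ b₂p (c₁ 0) + b₂m (c₁ 0) := busemann_sum_nonneg h₂ hb₂p hb₂m (c₁ 0)
  have n2 : 0 ≤ b₁p (c₂ 0) + b₁m (c₂ 0) := busemann_sum_nonneg h₁ hb₁p hb₁m (c₂ 0)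
  have e1 := hA (c₁ 0)
  have e2 := hA' (c₁ 0)
  have e3 := hA (c₂ 0)
  have e4 := hA' (c₂ 0)
  intro x
  have f1 := hA x
  have f2 := hA' x
  linarith
end

section
/- Let X be a geodesic ptolemaic metric space and let c : ℝ → X be a geodesic line such that X is foliated by parallels to c: for every point x ∈ X there exists a geodesic line c_x parallel to c with c_x(0) = x. Then the Busemann functions b⁺ and b⁻ of the forward and backward rays of c are affine, i.e. their composition with any geodesic γ : [0,1] → X is an affine function of the parameter. -/
open Metric Set Filter Topology

/-- A function is affine if its composition with any geodesic is an affine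
function of the parameter. -/
def AffineOnGeodesics {X : Type*} [MetricSpace X] (f : X → ℝ) : Prop :=
  ∀ γ : ℝ → X, ∀ l : ℝ, 0 ≤ l →
    (∀ s ∈ Set.Icc (0:ℝ) 1, ∀ t ∈ Set.Icc (0:ℝ) 1,
      dist (γ s) (γ t) = l * |s - t|) →
    ∃ α β : ℝ, ∀ t ∈ Set.Icc (0:ℝ) 1, f (γ t) = α * t + β

section Aux

variable {X : Type*} [MetricSpace X]

/-- A Busemann function is bounded above by each of the approximants. -/
lemma busemann_le {d : ℝ → X} {b : X → ℝ}
    (hb : ∀ x : X, Tendsto (fun t => dist x (d t) - t) atTop (𝓝 (b x)))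
    (hd : IsGeodesicLine d) (z : X) (T : ℝ) :
    b z ≤ dist z (d T) - T := by
  refine le_of_tendsto (hb z) ?_
  filter_upwards [eventually_ge_atTop T] with t ht
  have h1 := dist_triangle z (d T) (d t)
  have h2 : dist (d T) (d t) = t - T := by
    rw [hd T t, abs_of_nonpos (by linarith : T - t ≤ 0)]; ring
  linarith

/-- Busemann functions are 1-Lipschitz (one-sided form suffices). -/
lemma busemann_lip_s13 {d : ℝ → X} {b : X → ℝ}
    (hb : ∀ x : X, Tendsto (fun t => dist x (d t) - t) atTop (𝓝 (b x)))
    (x y : X) : b x - b y ≤ dist x y := by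
  refine le_of_tendsto ((hb x).sub (hb y)) ?_
  filter_upwards with t
  have := dist_triangle x y (d t)
  linarith

/-- Value of a Busemann function on its own line. -/
lemma busemann_self {d : ℝ → X} {b : X → ℝ}
    (hb : ∀ x : X, Tendsto (fun t => dist x (d t) - t) atTop (𝓝 (b x)))
    (hd : IsGeodesicLine d) (T : ℝ) : b (d T) = -T := by
  refine tendsto_nhds_unique (hb (d T)) ?_
  have h : (fun _ : ℝ => -T) =ᶠ[atTop] fun t => dist (d T) (d t) - t := by
    filter_upwards [eventually_ge_atTop T] with t ht
    rw [hd T t, abs_of_nonpos (by linarith : T - t ≤ 0)]; ring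
  exact Tendsto.congr' h tendsto_const_nhds

/-- Key convexity estimate from the Ptolemy inequality applied with a point
far out on the line `d`. -/
lemma key3 (hPT : Ptolemaic X) {d : ℝ → X} {b : X → ℝ}
    (hb : ∀ x : X, Tendsto (fun t => dist x (d t) - t) atTop (𝓝 (b x)))
    (p q r : X) (A B : ℝ)
    (hpq : dist p q = A) (hqr : dist q r = B) (hpr : dist p r = A + B) :
    (A + B) * b q ≤ B * b p + A * b r := by
  refine le_of_tendsto_of_tendsto' ((hb q).const_mul (A + B))
    (((hb p).const_mul B).add ((hb r).const_mul A)) ?_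
  intro T
  have hpt := hPT p r (d T) q
  rw [hpr, dist_comm (d T) q, show dist r q = B from (dist_comm r q).trans hqr, hpq] at hpt
  nlinarith [hpt]

/-- Along a line `ℓ` whose distance to `d` is sublinear at `+∞`, the Busemann
function of `d` decreases with slope exactly one. -/
lemma slope_lemma (hPT : Ptolemaic X) {d : ℝ → X} {b : X → ℝ}
    (hb : ∀ x : X, Tendsto (fun t => dist x (d t) - t) atTop (𝓝 (b x)))
    (hd : IsGeodesicLine d) {ℓ : ℝ → X} (hℓ : IsGeodesicLine ℓ)
    (hsub : Tendsto (fun T => dist (d T) (ℓ T) / T) atTop (𝓝 0))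
    (s t : ℝ) (hst : s ≤ t) : b (ℓ t) = b (ℓ s) - (t - s) := by
  have hlow : b (ℓ s) - b (ℓ t) ≤ t - s := by
    have h := busemann_lip_s13 hb (ℓ s) (ℓ t)
    rw [hℓ s t, abs_of_nonpos (by linarith : s - t ≤ 0)] at h
    linarith
  have hTs : Tendsto (fun T : ℝ => T - s) atTop atTop := by
    simpa [sub_eq_add_neg] using tendsto_atTop_add_const_right atTop (-s) (tendsto_id (α := ℝ))
  have h1 : Tendsto (fun T : ℝ => (T - t) / (T - s)) atTop (𝓝 1) := by
    have a1 : Tendsto (fun T : ℝ => (s - t) / (T - s)) atTop (𝓝 0) :=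
      Tendsto.div_atTop tendsto_const_nhds hTs
    have a2 : Tendsto (fun T : ℝ => 1 + (s - t) / (T - s)) atTop (𝓝 (1 + 0)) :=
      tendsto_const_nhds.add a1
    rw [add_zero] at a2
    refine Tendsto.congr' ?_ a2
    filter_upwards [eventually_gt_atTop s] with T hT
    have hne : T - s ≠ 0 := ne_of_gt (by linarith)
    field_simp
    ring
  have h2 : Tendsto (fun T : ℝ => T / (T - s)) atTop (𝓝 1) := by
    have a1 : Tendsto (fun T : ℝ => s / (T - s)) atTop (𝓝 0) :=
      Tendsto.div_atTop tendsto_const_nhds hTs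
    have a2 : Tendsto (fun T : ℝ => 1 + s / (T - s)) atTop (𝓝 (1 + 0)) :=
      tendsto_const_nhds.add a1
    rw [add_zero] at a2
    refine Tendsto.congr' ?_ a2
    filter_upwards [eventually_gt_atTop s] with T hT
    have hne : T - s ≠ 0 := ne_of_gt (by linarith)
    field_simp
    ring
  have h3 : Tendsto (fun T : ℝ => dist (d T) (ℓ T) / (T - s)) atTop (𝓝 0) := by
    have a1 := hsub.mul h2
    rw [zero_mul] at a1
    refine Tendsto.congr' ?_ a1
    filter_upwards [eventually_gt_atTop (max s 0)] with T hT
    have h0' : T ≠ 0 := ne_of_gt (lt_of_le_of_lt (le_max_right s 0) hT)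
    have hne : T - s ≠ 0 := ne_of_gt (by
      have := lt_of_le_of_lt (le_max_left s 0) hT; linarith)
    field_simp
  have hg : Tendsto
      (fun T : ℝ => ((T - t) * b (ℓ s) + (t - s) * (dist (d T) (ℓ T) - T)) / (T - s))
      atTop (𝓝 (b (ℓ s) - (t - s))) := by
    have a1 := ((h1.mul_const (b (ℓ s))).add (h3.const_mul (t - s))).sub (h2.const_mul (t - s))
    have e : (1 : ℝ) * b (ℓ s) + (t - s) * 0 - (t - s) * 1 = b (ℓ s) - (t - s) := by ring
    rw [e] at a1
    refine Tendsto.congr' ?_ a1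
    filter_upwards [eventually_gt_atTop s] with T hT
    have hne : T - s ≠ 0 := ne_of_gt (by linarith)
    field_simp
    ring
  have hup : b (ℓ t) ≤ b (ℓ s) - (t - s) := by
    refine ge_of_tendsto hg ?_
    filter_upwards [eventually_ge_atTop (max t (s + 1))] with T hT
    have hTt : t ≤ T := le_trans (le_max_left _ _) hT
    have hTs' : (0:ℝ) < T - s := by
      have := le_trans (le_max_right t (s + 1)) hT; linarith
    have k := key3 hPT hb (ℓ s) (ℓ t) (ℓ T) (t - s) (T - t)
      (by rw [hℓ s t, abs_of_nonpos (by linarith : s - t ≤ 0)]; ring)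
      (by rw [hℓ t T, abs_of_nonpos (by linarith : t - T ≤ 0)]; ring)
      (by rw [hℓ s T, abs_of_nonpos (by linarith : s - T ≤ 0)]; ring)
    have hbT : b (ℓ T) ≤ dist (d T) (ℓ T) - T := by
      have l1 := busemann_lip_s13 hb (ℓ T) (d T)
      have l2 := busemann_self hb hd T
      rw [dist_comm] at l1
      linarith
    have m : (t - s) * b (ℓ T) ≤ (t - s) * (dist (d T) (ℓ T) - T) :=
      mul_le_mul_of_nonneg_left hbT (by linarith)
    rw [le_div_iff₀ hTs']
    nlinarith [k, m]
  linarith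

/-- Values of the Busemann function along a parallel line. -/
lemma line_val (hPT : Ptolemaic X) {d : ℝ → X} {b : X → ℝ}
    (hb : ∀ x : X, Tendsto (fun t => dist x (d t) - t) atTop (𝓝 (b x)))
    (hd : IsGeodesicLine d) {ℓ : ℝ → X} (hℓ : IsGeodesicLine ℓ)
    (hsub : Tendsto (fun T => dist (d T) (ℓ T) / T) atTop (𝓝 0)) (r : ℝ) :
    b (ℓ r) = b (ℓ 0) - r := by
  rcases le_total 0 r with h | h
  · have := slope_lemma hPT hb hd hℓ hsub 0 r h
    simpa using this
  · have := slope_lemma hPT hb hd hℓ hsub r 0 h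
    linarith

/-- If two convex Busemann-type functions have constant sum, each is affine on
geodesics. -/
lemma affine_aux (hPT : Ptolemaic X) {d1 d2 : ℝ → X} {b1 b2 : X → ℝ}
    (hb1 : ∀ x : X, Tendsto (fun t => dist x (d1 t) - t) atTop (𝓝 (b1 x)))
    (hb2 : ∀ x : X, Tendsto (fun t => dist x (d2 t) - t) atTop (𝓝 (b2 x)))
    (hconst : ∀ x y : X, b1 x + b2 x = b1 y + b2 y) :
    AffineOnGeodesics b1 := by
  intro γ l hl hγ
  refine ⟨b1 (γ 1) - b1 (γ 0), b1 (γ 0), fun u hu => ?_⟩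
  obtain ⟨hu0, hu1⟩ := hu
  have h01 : (0:ℝ) ∈ Icc (0:ℝ) 1 := ⟨le_refl _, by norm_num⟩
  have h11 : (1:ℝ) ∈ Icc (0:ℝ) 1 := ⟨by norm_num, le_refl _⟩
  rcases eq_or_lt_of_le hl with hl0 | hl0
  · have e1 : γ 1 = γ 0 := by
      have h := hγ 1 h11 0 h01
      rw [← hl0, zero_mul] at h
      exact dist_eq_zero.mp h
    have e2 : γ u = γ 0 := by
      have h := hγ u ⟨hu0, hu1⟩ 0 h01
      rw [← hl0, zero_mul] at h
      exact dist_eq_zero.mp h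
    rw [e1, e2]; ring
  · have e0u : dist (γ 0) (γ u) = l * u := by
      rw [hγ 0 h01 u ⟨hu0, hu1⟩, abs_of_nonpos (by linarith : (0:ℝ) - u ≤ 0)]; ring
    have eu1 : dist (γ u) (γ 1) = l * (1 - u) := by
      rw [hγ u ⟨hu0, hu1⟩ 1 h11, abs_of_nonpos (by linarith : u - 1 ≤ 0)]; ring
    have e01 : dist (γ 0) (γ 1) = l * u + l * (1 - u) := by
      rw [hγ 0 h01 1 h11, show |(0:ℝ) - 1| = 1 by norm_num]; ring
    have k1 := key3 hPT hb1 (γ 0) (γ u) (γ 1) (l * u) (l * (1 - u)) e0u eu1 e01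
    have k2 := key3 hPT hb2 (γ 0) (γ u) (γ 1) (l * u) (l * (1 - u)) e0u eu1 e01
    have hup1 : b1 (γ u) ≤ (1 - u) * b1 (γ 0) + u * b1 (γ 1) := by
      have h : l * b1 (γ u) ≤ l * ((1 - u) * b1 (γ 0) + u * b1 (γ 1)) := by nlinarith [k1]
      exact le_of_mul_le_mul_left h hl0
    have hup2 : b2 (γ u) ≤ (1 - u) * b2 (γ 0) + u * b2 (γ 1) := by
      have h : l * b2 (γ u) ≤ l * ((1 - u) * b2 (γ 0) + u * b2 (γ 1)) := by nlinarith [k2]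
      exact le_of_mul_le_mul_left h hl0
    have f1 := hconst (γ u) (γ 0)
    have f2 := hconst (γ 1) (γ 0)
    have f2u : u * (b1 (γ 1) + b2 (γ 1)) = u * (b1 (γ 0) + b2 (γ 0)) := by rw [f2]
    nlinarith [hup1, hup2, f1, f2u]

end Aux

/-- **If a geodesic PT space is foliated by parallels to a line, then the
Busemann functions of that line are affine.** -/
theorem busemann_affine_of_foliation_by_parallels
    (X : Type*) [MetricSpace X]
    (hPT : Ptolemaic X) (hgeo : GeodesicMetricSpace X)
    (c : ℝ → X) (hc : IsGeodesicLine c)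
    (hfol : ∀ x : X, ∃ cx : ℝ → X, IsGeodesicLine cx ∧
      ParallelLines c cx ∧ cx 0 = x)
    (bp bm : X → ℝ)
    (hbp : IsBusemannOf (fun t => c t) bp)
    (hbm : IsBusemannOf (fun t => c (-t)) bm) :
    AffineOnGeodesics bp ∧ AffineOnGeodesics bm := by
  have hbp' : ∀ x : X, Tendsto (fun t => dist x (c t) - t) atTop (𝓝 (bp x)) := hbp
  have hbm' : ∀ x : X, Tendsto (fun t => dist x (c (-t)) - t) atTop (𝓝 (bm x)) := hbm
  have hcm : IsGeodesicLine (fun t : ℝ => c (-t)) := by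
    intro s t
    rw [hc (-s) (-t), show -s - -t = -(s - t) by ring, abs_neg]
  choose ℓ hline hpar h0 using hfol
  have hlinem : ∀ z : X, IsGeodesicLine (fun u : ℝ => ℓ z (-u)) := by
    intro z s t
    rw [hline z (-s) (-t), show -s - -t = -(s - t) by ring, abs_neg]
  have hsubp : ∀ z : X, Tendsto (fun T => dist (c T) (ℓ z T) / T) atTop (𝓝 0) := by
    intro z
    refine Tendsto.congr' ?_ (hpar z).1
    filter_upwards [eventually_gt_atTop (0:ℝ)] with T hT
    rw [abs_of_pos hT]
  have hsubm : ∀ z : X,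
      Tendsto (fun T => dist (c (-T)) (ℓ z (-T)) / T) atTop (𝓝 0) := by
    intro z
    have h2 := ((hpar z).2).comp tendsto_neg_atTop_atBot
    refine Tendsto.congr' ?_ h2
    filter_upwards [eventually_gt_atTop (0:ℝ)] with T hT
    simp only [Function.comp_apply]
    rw [abs_neg, abs_of_pos hT]
  have valp : ∀ (z : X) (r : ℝ), bp (ℓ z r) = bp z - r := by
    intro z r
    have h := line_val hPT hbp' hc (hline z) (hsubp z) r
    rwa [h0 z] at h
  have valm : ∀ (z : X) (r : ℝ), bm (ℓ z r) = bm z + r := by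
    intro z r
    have h := line_val hPT hbm' hcm (hlinem z) (hsubm z) (-r)
    simp only [neg_neg, neg_zero] at h
    rw [h0 z] at h
    linarith
  have hFle : ∀ x y : X, bp x + bm x ≤ bp y + bm y := by
    intro x y
    set A := bp x - bp y with hA
    set B := bm x - bm y with hB
    have hφ : Tendsto (fun t => dist (ℓ x t) (ℓ y t) / t) atTop (𝓝 0) := by
      have hub := (hsubp x).add (hsubp y)
      rw [add_zero] at hub
      refine squeeze_zero' ?_ ?_ hub
      · filter_upwards [eventually_gt_atTop (0:ℝ)] with t ht
        positivity
      · filter_upwards [eventually_gt_atTop (0:ℝ)] with t ht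
        have tri : dist (ℓ x t) (ℓ y t) ≤ dist (c t) (ℓ x t) + dist (c t) (ℓ y t) :=
          dist_triangle_left _ _ _
        rw [← add_div]
        exact div_le_div_of_nonneg_right tri ht.le |>.trans_eq rfl
    have hABq : Tendsto (fun t : ℝ => A * B / t) atTop (𝓝 0) :=
      Tendsto.div_atTop tendsto_const_nhds tendsto_id
    have hbound : Tendsto
        (fun t => dist x y * (dist (ℓ x t) (ℓ y t) / t) - A * B / t) atTop (𝓝 0) := by
      have h := (hφ.const_mul (dist x y)).sub hABq
      simpa using h
    have main : A + B ≤ 0 := by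
      refine ge_of_tendsto hbound ?_
      filter_upwards [eventually_ge_atTop (|A| + |B| + 1)] with t ht
      have ht0 : (0:ℝ) < t := lt_of_lt_of_le (by positivity) ht
      have hA' : 0 ≤ t + A := by
        have h1 := neg_abs_le A
        have h2 := abs_nonneg B
        linarith
      have hB' : 0 ≤ t + B := by
        have h1 := neg_abs_le B
        have h2 := abs_nonneg A
        linarith
      have low1 : t + A ≤ dist (ℓ x 0) (ℓ y t) := by
        have hl := busemann_lip_s13 hbp' (ℓ x 0) (ℓ y t)
        rw [valp x 0, valp y t] at hl
        rw [hA]; linarith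
      have low2 : t + B ≤ dist (ℓ y 0) (ℓ x t) := by
        have hl := busemann_lip_s13 hbm' (ℓ x t) (ℓ y 0)
        rw [valm x t, valm y 0, dist_comm] at hl
        rw [hB]; linarith
      have hmul : (t + A) * (t + B) ≤ dist (ℓ x 0) (ℓ y t) * dist (ℓ y 0) (ℓ x t) :=
        mul_le_mul low1 low2 hB' dist_nonneg
      have hpt := hPT (ℓ x 0) (ℓ y t) (ℓ y 0) (ℓ x t)
      have e1 : dist (ℓ x 0) (ℓ x t) = t := by
        rw [hline x 0 t, abs_of_nonpos (by linarith : (0:ℝ) - t ≤ 0)]; ring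
      have e2 : dist (ℓ y t) (ℓ y 0) = t := by
        rw [hline y t 0, abs_of_nonneg (by linarith : (0:ℝ) ≤ t - 0)]; ring
      have e3 : dist (ℓ x 0) (ℓ y 0) = dist x y := by rw [h0 x, h0 y]
      have e4 : dist (ℓ y t) (ℓ x t) = dist (ℓ x t) (ℓ y t) := dist_comm _ _
      rw [e1, e2, e3, e4] at hpt
      have expand : dist x y * (dist (ℓ x t) (ℓ y t) / t) - A * B / t
          = (dist x y * dist (ℓ x t) (ℓ y t) - A * B) / t := by ring
      rw [expand, le_div_iff₀ ht0]
      nlinarith [hmul, hpt]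
    linarith [main]
  have hconst : ∀ x y : X, bp x + bm x = bp y + bm y :=
    fun x y => le_antisymm (hFle x y) (hFle y x)
  constructor
  · exact affine_aux hPT hbp' hbm' hconst
  · exact affine_aux hPT hbm' hbp' (fun x y => by have := hconst x y; linarith)
end

section
/- Let X be a ptolemaic metric space, let c : ℝ → X be a geodesic line with Busemann functions b⁺, b⁻ of its forward and backward rays, and let c' : ℝ → X be any geodesic line parallel to c. Then b⁺(c'(s)) + b⁻(c'(s)) = 0 for every s ∈ ℝ. -/
open Metric Set Filter Topology

/-- The reversal of a geodesic line is a geodesic line. -/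
lemma aux_isGeodesicLine_neg {X : Type*} [MetricSpace X] {c : ℝ → X}
    (hc : IsGeodesicLine c) : IsGeodesicLine (fun t => c (-t)) := by
  intro s t
  simp only
  rw [hc (-s) (-t), show -s - -t = -(s - t) by ring, abs_neg]

/-- Busemann limits exist along any geodesic line. -/
lemma aux_exists_busemann {X : Type*} [MetricSpace X] (c : ℝ → X)
    (hc : IsGeodesicLine c) (x : X) :
    ∃ b : ℝ, Tendsto (fun t => dist x (c t) - t) atTop (nhds b) := by
  have hanti : Antitone (fun t => dist x (c t) - t) := by
    intro a b hab
    have htr := dist_triangle x (c a) (c b)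
    have h2 : dist (c a) (c b) = |a - b| := hc a b
    rw [show |a - b| = b - a by rw [abs_of_nonpos (by linarith)]; ring] at h2
    simp only
    linarith
  have hbdd : BddBelow (Set.range fun t => dist x (c t) - t) := by
    refine ⟨-dist x (c 0), ?_⟩
    rintro y ⟨t, rfl⟩
    have h1 : dist (c 0) (c t) ≤ dist (c 0) x + dist x (c t) := dist_triangle _ _ _
    have h2 : dist (c 0) (c t) = |0 - t| := hc 0 t
    have h3 : t ≤ |0 - t| := by rw [zero_sub, abs_neg]; exact le_abs_self t
    have h4 : dist (c 0) x = dist x (c 0) := dist_comm _ _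
    simp only
    linarith
  exact ⟨_, tendsto_atTop_ciInf hanti hbdd⟩

/-- The sum of the two Busemann limits of a line at any point is nonnegative. -/
lemma aux_pair_nonneg {X : Type*} [MetricSpace X] (c : ℝ → X)
    (hc : IsGeodesicLine c) (x : X) (b1 b2 : ℝ)
    (h1 : Tendsto (fun t => dist x (c t) - t) atTop (nhds b1))
    (h2 : Tendsto (fun t => dist x (c (-t)) - t) atTop (nhds b2)) : 0 ≤ b1 + b2 := by
  refine ge_of_tendsto (h1.add h2) ?_
  filter_upwards [eventually_ge_atTop (0 : ℝ)] with t ht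
  have h := hc t (-t)
  have habs : |t - -t| = 2 * t := by
    rw [show t - -t = 2 * t by ring, abs_of_nonneg (by linarith)]
  rw [habs] at h
  have htr := dist_triangle (c t) x (c (-t))
  have hcomm : dist (c t) x = dist x (c t) := dist_comm _ _
  show (0:ℝ) ≤ dist x (c t) - t + (dist x (c (-t)) - t)
  linarith

/-- Key Ptolemy estimate: if `F` is the Busemann limit of `c'⁺` at `c s` and
`f` that of `c⁺` at `c' s`, and the lines diverge sublinearly at `+∞`, then
`f + F + 2s ≤ 0`. -/
lemma aux_key_estimate {X : Type*} [MetricSpace X] (hPT : Ptolemaic X)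
    (c c' : ℝ → X) (hc : IsGeodesicLine c) (hc' : IsGeodesicLine c')
    (hpar : Tendsto (fun t => dist (c t) (c' t) / |t|) atTop (nhds 0))
    (s F f : ℝ)
    (hF : Tendsto (fun u => dist (c s) (c' u) - u) atTop (nhds F))
    (hf : Tendsto (fun u => dist (c' s) (c u) - u) atTop (nhds f)) :
    f + F + 2 * s ≤ 0 := by
  set A : ℝ → ℝ := fun u => dist (c' s) (c u) - u with hA
  set B : ℝ → ℝ := fun u => dist (c s) (c' u) - u with hB
  set R : ℝ → ℝ := fun u =>
    dist (c s) (c' s) * (dist (c u) (c' u) / u) + (s ^ 2 - A u * B u) * u⁻¹ with hR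
  -- the distance quotient without the absolute value
  have hnu : Tendsto (fun u => dist (c u) (c' u) / u) atTop (nhds 0) := by
    apply hpar.congr'
    filter_upwards [eventually_gt_atTop (0 : ℝ)] with u hu
    rw [abs_of_pos hu]
  -- R tends to 0
  have hRlim : Tendsto R atTop (nhds 0) := by
    have h1 : Tendsto (fun u => dist (c s) (c' s) * (dist (c u) (c' u) / u)) atTop
        (nhds (dist (c s) (c' s) * 0)) := tendsto_const_nhds.mul hnu
    have h2 : Tendsto (fun u => (s ^ 2 - A u * B u) * u⁻¹) atTop
        (nhds ((s ^ 2 - f * F) * 0)) :=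
      (tendsto_const_nhds.sub (hf.mul hF)).mul tendsto_inv_atTop_zero
    have := h1.add h2
    simpa using this
  -- the eventual Ptolemy inequality
  have hev : ∀ᶠ u in atTop, A u + B u + 2 * s ≤ R u := by
    filter_upwards [eventually_ge_atTop s, eventually_gt_atTop (0 : ℝ)] with u hus hu0
    have ptol := hPT (c s) (c' u) (c' s) (c u)
    have d1 : dist (c s) (c u) = u - s := by
      rw [hc s u, show s - u = -(u - s) by ring, abs_neg, abs_of_nonneg (by linarith)]
    have d2 : dist (c' u) (c' s) = u - s := by
      rw [hc' u s, abs_of_nonneg (by linarith)]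
    have d3 : dist (c' u) (c u) = dist (c u) (c' u) := dist_comm _ _
    rw [d1, d2, d3] at ptol
    have hAB : dist (c' s) (c u) = A u + u := by simp [hA]
    have hBB : dist (c s) (c' u) = B u + u := by simp [hB]
    rw [hAB, hBB] at ptol
    have hgoal : (A u + B u + 2 * s) * u ≤
        dist (c s) (c' s) * dist (c u) (c' u) + s ^ 2 - A u * B u := by nlinarith [ptol]
    have : R u = (dist (c s) (c' s) * dist (c u) (c' u) + s ^ 2 - A u * B u) / u := by
      simp only [hR]
      ring
    rw [this, le_div_iff₀ hu0]
    exact hgoal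
  have hlim : Tendsto (fun u => A u + B u + 2 * s) atTop (nhds (f + F + 2 * s)) :=
    (hf.add hF).add tendsto_const_nhds
  exact le_of_tendsto_of_tendsto hlim hRlim hev

/-- **The sum of the two Busemann functions of a line vanishes on every
parallel line.** -/
theorem busemann_sum_zero_on_parallel_line
    (X : Type*) [MetricSpace X] (hPT : Ptolemaic X)
    (c c' : ℝ → X) (hc : IsGeodesicLine c) (hc' : IsGeodesicLine c')
    (hpar : ParallelLines c c')
    (bp bm : X → ℝ)
    (hbp : IsBusemannOf (fun t => c t) bp)
    (hbm : IsBusemannOf (fun t => c (-t)) bm) :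
    ∀ s : ℝ, bp (c' s) + bm (c' s) = 0 := by
  intro s
  have hcneg : IsGeodesicLine (fun t => c (-t)) := aux_isGeodesicLine_neg hc
  have hc'neg : IsGeodesicLine (fun t => c' (-t)) := aux_isGeodesicLine_neg hc'
  -- Busemann limits of c' at the point c s
  obtain ⟨F, hF⟩ := aux_exists_busemann c' hc' (c s)
  obtain ⟨G, hG⟩ := aux_exists_busemann (fun t => c' (-t)) hc'neg (c s)
  -- parallelism transported to the reversed lines
  have hpar2 : Tendsto (fun t => dist (c (-t)) (c' (-t)) / |t|) atTop (nhds 0) := by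
    have := hpar.2.comp tendsto_neg_atTop_atBot
    simpa [Function.comp_def, abs_neg] using this
  -- the two key Ptolemy estimates
  have key1 : bp (c' s) + F + 2 * s ≤ 0 :=
    aux_key_estimate hPT c c' hc hc' hpar.1 s F (bp (c' s)) hF (by simpa using hbp (c' s))
  have key2 : bm (c' s) + G + 2 * (-s) ≤ 0 := by
    refine aux_key_estimate hPT (fun t => c (-t)) (fun t => c' (-t)) hcneg hc'neg hpar2
      (-s) G (bm (c' s)) ?_ ?_
    · simpa using hG
    · simpa using hbm (c' s)
  -- the two lower bounds
  have low1 : 0 ≤ bp (c' s) + bm (c' s) :=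
    aux_pair_nonneg c hc (c' s) _ _ (by simpa using hbp (c' s)) (by simpa using hbm (c' s))
  have low2 : 0 ≤ F + G :=
    aux_pair_nonneg c' hc' (c s) F G hF (by simpa using hG)
  linarith
end

section
/- Let X be a geodesic ptolemaic metric space and let c : [0,∞) → X be a geodesic ray. Then the Busemann function b_c is convex: for every geodesic γ : [0,1] → X, the function t ↦ b_c(γ(t)) is convex on [0,1]. -/
open Metric Set Filter Topology

/-- In a ptolemaic space, the distance to a fixed point is convex along geodesics. -/
lemma ptolemaic_dist_convex {X : Type*} [MetricSpace X]
    (hPT : Ptolemaic X)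
    (γ : ℝ → X) (l : ℝ)
    (hγ : ∀ s ∈ Set.Icc (0:ℝ) 1, ∀ t ∈ Set.Icc (0:ℝ) 1,
      dist (γ s) (γ t) = l * |s - t|)
    {x y : ℝ} (hx : x ∈ Set.Icc (0:ℝ) 1) (hy : y ∈ Set.Icc (0:ℝ) 1)
    {s t : ℝ} (hs : 0 ≤ s) (ht : 0 ≤ t) (hst : s + t = 1) (p : X) :
    dist (γ (s * x + t * y)) p ≤ s * dist (γ x) p + t * dist (γ y) p := by
  obtain ⟨hx0, hx1⟩ := hx
  obtain ⟨hy0, hy1⟩ := hy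
  have hm : s * x + t * y ∈ Set.Icc (0:ℝ) 1 :=
    ⟨by nlinarith, by nlinarith⟩
  have h1 : dist (γ x) (γ (s * x + t * y)) = t * (l * |x - y|) := by
    rw [hγ x ⟨hx0, hx1⟩ _ hm]
    have e : x - (s * x + t * y) = t * (x - y) := by linear_combination (-x) * hst
    rw [e, abs_mul, abs_of_nonneg ht]; ring
  have h2 : dist (γ y) (γ (s * x + t * y)) = s * (l * |x - y|) := by
    rw [dist_comm, hγ _ hm y ⟨hy0, hy1⟩]
    have e : s * x + t * y - y = s * (x - y) := by linear_combination y * hst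
    rw [e, abs_mul, abs_of_nonneg hs]; ring
  have h3 : dist (γ x) (γ y) = l * |x - y| := hγ x ⟨hx0, hx1⟩ y ⟨hy0, hy1⟩
  set L := l * |x - y| with hL
  rcases eq_or_lt_of_le (dist_nonneg.trans_eq h3) with h0 | hpos
  · -- L = 0 : all three points coincide
    have hxy : γ x = γ y := by
      rw [← dist_eq_zero, h3, ← h0]
    have hxm : γ x = γ (s * x + t * y) := by
      rw [← dist_eq_zero, h1, ← h0]; ring
    rw [← hxm, ← hxy]
    nlinarith [dist_nonneg (x := γ x) (y := p)]
  · have PT := hPT (γ x) (γ y) (γ (s * x + t * y)) p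
    rw [h1, h2, h3] at PT
    nlinarith [dist_nonneg (x := γ (s * x + t * y)) (y := p)]

/-- **The Busemann function of a ray in a geodesic PT space is convex.** -/
theorem busemann_convex
    (X : Type*) [MetricSpace X]
    (hPT : Ptolemaic X) (hgeo : GeodesicMetricSpace X)
    (c : ℝ → X) (hc : IsGeodesicRay c)
    (b : X → ℝ) (hb : IsBusemannOf c b)
    (γ : ℝ → X) (l : ℝ) (hl : 0 ≤ l)
    (hγ : ∀ s ∈ Set.Icc (0:ℝ) 1, ∀ t ∈ Set.Icc (0:ℝ) 1,
      dist (γ s) (γ t) = l * |s - t|) :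
    ConvexOn ℝ (Set.Icc (0:ℝ) 1) (fun t => b (γ t)) := by
  refine ⟨convex_Icc 0 1, ?_⟩
  intro x hx y hy s t hs ht hst
  simp only [smul_eq_mul]
  have hf : Tendsto (fun r => dist (γ (s * x + t * y)) (c r) - r) atTop
      (nhds (b (γ (s * x + t * y)))) := hb _
  have hg : Tendsto (fun r => s * (dist (γ x) (c r) - r) + t * (dist (γ y) (c r) - r)) atTop
      (nhds (s * b (γ x) + t * b (γ y))) :=
    ((hb (γ x)).const_mul s).add ((hb (γ y)).const_mul t)
  refine le_of_tendsto_of_tendsto' hf hg fun r => ?_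
  have key := ptolemaic_dist_convex hPT γ l hγ hx hy hs ht hst (c r)
  have hr : s * r + t * r = r := by linear_combination r * hst
  linarith [key]
end

section
/- Let X be a ptolemaic metric space and let c, c' : ℝ → X be two unit-speed geodesic lines such that c(t) ≠ c'(t) for every t, and such that they are mutually nearest along matching parameters: d(c(t), c'(t')) ≥ d(c(t), c'(t)) and d(c'(t), c(t')) ≥ d(c'(t), c(t)) for all t, t' ∈ ℝ. Then the function μ(t) = d(c(t), c'(t)) is constant on ℝ. -/
open Metric Set Filter Topology

/-- **Two disjoint mutually nearest geodesic lines in a PT space are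
equidistant along matching parameters.** -/
theorem mutually_nearest_lines_equidistant
    (X : Type*) [MetricSpace X] (hPT : Ptolemaic X)
    (c c' : ℝ → X) (hc : IsGeodesicLine c) (hc' : IsGeodesicLine c')
    (hne : ∀ t : ℝ, c t ≠ c' t)
    (hmin : ∀ t t' : ℝ, dist (c t) (c' t) ≤ dist (c t) (c' t'))
    (hmin' : ∀ t t' : ℝ, dist (c' t) (c t) ≤ dist (c' t) (c t')) :
    ∀ t t' : ℝ, dist (c t) (c' t) = dist (c t') (c' t') := by
  set μ : ℝ → ℝ := fun s => dist (c s) (c' s) with hμdef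
  -- Key inequality from Ptolemy: μ a * |μ a - μ b| ≤ (a - b)^2
  have key : ∀ a b : ℝ, μ a * |μ a - μ b| ≤ (a - b) ^ 2 := by
    intro a b
    have hP := hPT (c a) (c' b) (c' a) (c b)
    have hd : dist (c a) (c b) = |a - b| := hc a b
    have hd' : dist (c' b) (c' a) = |b - a| := hc' b a
    have hda : dist (c a) (c' a) = μ a := rfl
    have hdb : dist (c' b) (c b) = μ b := dist_comm (c' b) (c b)
    rw [hd, hd', hda, hdb, abs_sub_comm b a] at hP
    have habs : |a - b| * |a - b| = (a - b) ^ 2 := by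
      rw [← abs_mul, ← sq, abs_of_nonneg (sq_nonneg _)]
    rw [habs] at hP
    have h1 : μ a ≤ dist (c a) (c' b) := hmin a b
    have h2 : μ b ≤ dist (c a) (c' b) := by
      have := hmin' b a
      rw [dist_comm (c' b) (c b), dist_comm (c' b) (c a)] at this
      exact this
    have h3 : μ a ≤ dist (c' a) (c b) := by
      have := hmin' a b
      rw [dist_comm (c' a) (c a)] at this
      exact this
    have h4 : μ b ≤ dist (c' a) (c b) := by
      have := hmin b a
      rw [dist_comm (c b) (c' a)] at this
      exact this
    have hμa0 : (0 : ℝ) ≤ μ a := dist_nonneg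
    have hμb0 : (0 : ℝ) ≤ μ b := dist_nonneg
    rcases le_total (μ b) (μ a) with h | h
    · rw [abs_of_nonneg (sub_nonneg.2 h)]
      have hsq : μ a * μ a ≤ dist (c a) (c' b) * dist (c' a) (c b) :=
        mul_le_mul h1 h3 hμa0 dist_nonneg
      nlinarith
    · rw [abs_of_nonpos (sub_nonpos.2 h)]
      have hsq : μ b * μ b ≤ dist (c a) (c' b) * dist (c' a) (c b) :=
        mul_le_mul h2 h4 hμb0 dist_nonneg
      nlinarith
  have hic : Isometry c := Isometry.of_dist_eq fun a b => by rw [hc a b, Real.dist_eq]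
  have hic' : Isometry c' := Isometry.of_dist_eq fun a b => by rw [hc' a b, Real.dist_eq]
  have hcont : Continuous μ := hic.continuous.dist hic'.continuous
  have hpos : ∀ s : ℝ, 0 < μ s := fun s => dist_pos.2 (hne s)
  -- main half: t ≤ t'
  have main : ∀ t t' : ℝ, t ≤ t' → μ t = μ t' := by
    intro t t' htt'
    obtain ⟨m, hm, hmOn⟩ :=
      isCompact_Icc.exists_isMinOn (nonempty_Icc.2 htt') hcont.continuousOn
    have hδ : 0 < μ m := hpos m
    have claim : ∀ N : ℕ, 0 < N → |μ t - μ t'| ≤ (t' - t) ^ 2 / (N * μ m) := by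
      intro N hN
      set h : ℝ := (t' - t) / N with hh
      have hNpos : (0 : ℝ) < N := Nat.cast_pos.2 hN
      have hh0 : 0 ≤ h := div_nonneg (sub_nonneg.2 htt') hNpos.le
      set a : ℕ → ℝ := fun i => t + i * h with ha
      have hmem : ∀ i : ℕ, i ≤ N → a i ∈ Icc t t' := by
        intro i hi
        constructor
        · have : 0 ≤ (i : ℝ) * h := mul_nonneg (Nat.cast_nonneg i) hh0
          simp only [ha]; linarith
        · have h1 : (i : ℝ) * h ≤ N * h :=
            mul_le_mul_of_nonneg_right (Nat.cast_le.2 hi) hh0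
          have h2 : (N : ℝ) * h = t' - t := by
            rw [hh]; field_simp
          simp only [ha]; linarith
      have hstep : ∀ i : ℕ, i < N →
          dist (μ (a i)) (μ (a (i + 1))) ≤ h ^ 2 / μ m := by
        intro i hi
        have hki := key (a i) (a (i + 1))
        have hdiff : a i - a (i + 1) = -h := by
          simp only [ha]; push_cast; ring
        rw [hdiff] at hki
        have hδi : μ m ≤ μ (a i) := hmOn (hmem i hi.le)
        have habs : |μ (a i) - μ (a (i + 1))| * μ m ≤ h ^ 2 := by
          have h0 : 0 ≤ |μ (a i) - μ (a (i + 1))| := abs_nonneg _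
          nlinarith
        rw [Real.dist_eq, le_div_iff₀ hδ]
        exact habs
      have hteles : dist (μ (a 0)) (μ (a N)) ≤
          ∑ i ∈ Finset.range N, dist (μ (a i)) (μ (a (i + 1))) :=
        dist_le_range_sum_dist (fun i => μ (a i)) N
      have hsum : ∑ i ∈ Finset.range N, dist (μ (a i)) (μ (a (i + 1)))
          ≤ N * (h ^ 2 / μ m) := by
        calc ∑ i ∈ Finset.range N, dist (μ (a i)) (μ (a (i + 1)))
            ≤ ∑ _i ∈ Finset.range N, h ^ 2 / μ m :=
              Finset.sum_le_sum fun i hi => hstep i (Finset.mem_range.1 hi)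
          _ = N * (h ^ 2 / μ m) := by rw [Finset.sum_const, Finset.card_range]; ring
      have ha0 : a 0 = t := by simp [ha]
      have haN : a N = t' := by
        simp only [ha, hh]
        field_simp
        ring
      have hfin : (N : ℝ) * (h ^ 2 / μ m) = (t' - t) ^ 2 / (N * μ m) := by
        rw [hh]
        field_simp
      calc |μ t - μ t'| = dist (μ (a 0)) (μ (a N)) := by
            rw [ha0, haN, Real.dist_eq]
        _ ≤ ∑ i ∈ Finset.range N, dist (μ (a i)) (μ (a (i + 1))) := hteles
        _ ≤ N * (h ^ 2 / μ m) := hsum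
        _ = (t' - t) ^ 2 / (N * μ m) := hfin
    by_contra hneq
    have hε : 0 < |μ t - μ t'| := abs_pos.2 (sub_ne_zero.2 hneq)
    obtain ⟨N, hNgt⟩ := exists_nat_gt ((t' - t) ^ 2 / (μ m * |μ t - μ t'|))
    have hN0 : 0 < N := by
      by_contra hN0
      push_neg at hN0
      interval_cases N
      have : 0 ≤ (t' - t) ^ 2 / (μ m * |μ t - μ t'|) :=
        div_nonneg (sq_nonneg _) (mul_nonneg hδ.le hε.le)
      simp at hNgt
      linarith
    have hcl := claim N hN0
    have hNpos : (0 : ℝ) < N := Nat.cast_pos.2 hN0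
    have hlt : (t' - t) ^ 2 / (N * μ m) < |μ t - μ t'| := by
      rw [div_lt_iff₀ (by positivity)]
      rw [div_lt_iff₀ (by positivity)] at hNgt
      nlinarith
    linarith
  intro t t'
  rcases le_total t t' with h | h
  · exact main t t' h
  · exact (main t' t h).symm
end

section
/- Let X be a ptolemaic metric space and let c, c' : ℝ → X be two unit-speed geodesic lines that are mutually nearest along matching parameters: d(c(t), c'(t')) ≥ d(c(t), c'(t)) and d(c'(t), c(t')) ≥ d(c'(t), c(t)) for all t, t' ∈ ℝ. Then, writing μ(t) = d(c(t), c'(t)), one has max{μ(t), μ(t')}² ≤ μ(t)·μ(t') + (t − t')² for all t, t' ∈ ℝ. -/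
open Metric Set Filter Topology

/-- **Key inequality for mutually nearest lines in a PT space:
`max{μ(t),μ(t')}² ≤ μ(t)·μ(t') + (t−t')²` where `μ(t) = d(c(t), c'(t))`.** -/
theorem mutually_nearest_lines_max_sq_le
    (X : Type*) [MetricSpace X] (hPT : Ptolemaic X)
    (c c' : ℝ → X) (hc : IsGeodesicLine c) (hc' : IsGeodesicLine c')
    (hmin : ∀ t t' : ℝ, dist (c t) (c' t) ≤ dist (c t) (c' t'))
    (hmin' : ∀ t t' : ℝ, dist (c' t) (c t) ≤ dist (c' t) (c t')) :
    ∀ t t' : ℝ,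
      (max (dist (c t) (c' t)) (dist (c t') (c' t'))) ^ 2 ≤
        dist (c t) (c' t) * dist (c t') (c' t') + (t - t') ^ 2 := by
  intro t t'
  have key := hPT (c t) (c' t') (c' t) (c t')
  have h1 : dist (c t) (c' t) ≤ dist (c t) (c' t') := hmin t t'
  have h2 : dist (c t') (c' t') ≤ dist (c t) (c' t') := by
    have := hmin' t' t
    rw [dist_comm (c' t') (c t)] at this
    rw [dist_comm (c t') (c' t')]
    exact this
  have h3 : dist (c t) (c' t) ≤ dist (c' t) (c t') := by
    rw [dist_comm (c t) (c' t)]; exact hmin' t t'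
  have h4 : dist (c t') (c' t') ≤ dist (c' t) (c t') := by
    have := hmin t' t
    rw [dist_comm (c t') (c' t)] at this
    exact this
  have hmax1 : max (dist (c t) (c' t)) (dist (c t') (c' t')) ≤ dist (c t) (c' t') :=
    max_le h1 h2
  have hmax2 : max (dist (c t) (c' t)) (dist (c t') (c' t')) ≤ dist (c' t) (c t') :=
    max_le h3 h4
  have hnn : 0 ≤ max (dist (c t) (c' t)) (dist (c t') (c' t')) :=
    le_trans dist_nonneg (le_max_left _ _)
  calc (max (dist (c t) (c' t)) (dist (c t') (c' t'))) ^ 2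
      ≤ dist (c t) (c' t') * dist (c' t) (c t') := by
        rw [sq]; exact mul_le_mul hmax1 hmax2 hnn dist_nonneg
    _ ≤ dist (c t) (c' t) * dist (c' t') (c t') + dist (c t) (c t') * dist (c' t') (c' t) := key
    _ = dist (c t) (c' t) * dist (c t') (c' t') + (t - t') ^ 2 := by
        rw [dist_comm (c' t') (c t'), hc t t', hc' t' t, abs_sub_comm t' t, ← sq_abs, sq]
end
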